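/- Let c > 0 and δ > 0, and let p_1, …, p_n be i.i.d. random variables with values in [0,1] whose common law has a density f with respect to Lebesgue measure satisfying f(1−x) = c + O(x^{δ}) as x → 0+. Set T_n = ∑_{k=1}^∞ (1 − ∏_{i=1}^n (1 − p_i^k)). Then the sequence of random variables T_n/n is stochastically bounded: for every ε > 0 there exists y > 0 such that, for all sufficiently large n, P(T_n/n > y) < ε. -/

import Mathlib

open MeasureTheory ProbabilityTheory Filter Asymptotics
open scoped ENNReal Topology

section auxx
open Real Set

private lemma aux_one_sub_prod_le_sum {ι : Type*} (s : Finset ι) (a : ι → ℝ)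
    (h0 : ∀ i ∈ s, 0 ≤ a i) (h1 : ∀ i ∈ s, a i ≤ 1) :
    1 - ∏ i ∈ s, (1 - a i) ≤ ∑ i ∈ s, a i := by
  classical
  induction s using Finset.induction_on with
  | empty => simp
  | @insert j s hj ih =>
    have h0' : ∀ i ∈ s, 0 ≤ a i := fun i hi => h0 i (Finset.mem_insert_of_mem hi)
    have h1' : ∀ i ∈ s, a i ≤ 1 := fun i hi => h1 i (Finset.mem_insert_of_mem hi)
    have hP0 : 0 ≤ ∏ i ∈ s, (1 - a i) :=
      Finset.prod_nonneg fun i hi => by linarith [h1' i hi]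
    have hP1 : ∏ i ∈ s, (1 - a i) ≤ 1 :=
      Finset.prod_le_one (fun i hi => by linarith [h1' i hi]) (fun i hi => by linarith [h0' i hi])
    rw [Finset.prod_insert hj, Finset.sum_insert hj]
    have haj0 := h0 j (Finset.mem_insert_self j s)
    have haj1 := h1 j (Finset.mem_insert_self j s)
    nlinarith [ih h0' h1']

private lemma aux_tsum_bound (n K : ℕ) (q : ℕ → ℝ)
    (h0 : ∀ i ∈ Finset.range n, 0 ≤ q i) (h1 : ∀ i ∈ Finset.range n, q i < 1) :
    ∑' k : ℕ, (1 - ∏ i ∈ Finset.range n, (1 - q i ^ (k + 1)))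
      ≤ K + ∑ i ∈ Finset.range n, q i ^ K / (1 - q i) := by
  set t : ℕ → ℝ := fun k => 1 - ∏ i ∈ Finset.range n, (1 - q i ^ (k + 1)) with ht
  have hq01 : ∀ i ∈ Finset.range n, ∀ k : ℕ, 0 ≤ q i ^ k ∧ q i ^ k ≤ 1 := by
    intro i hi k
    exact ⟨pow_nonneg (h0 i hi) k, pow_le_one₀ (h0 i hi) (h1 i hi).le⟩
  have ht0 : ∀ k, 0 ≤ t k := by
    intro k
    have : ∏ i ∈ Finset.range n, (1 - q i ^ (k + 1)) ≤ 1 :=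
      Finset.prod_le_one (fun i hi => by linarith [(hq01 i hi (k+1)).2])
        (fun i hi => by linarith [(hq01 i hi (k+1)).1])
    simp only [ht]; linarith
  have ht1 : ∀ k, t k ≤ 1 := by
    intro k
    have : 0 ≤ ∏ i ∈ Finset.range n, (1 - q i ^ (k + 1)) :=
      Finset.prod_nonneg (fun i hi => by linarith [(hq01 i hi (k+1)).2])
    simp only [ht]; linarith
  have htg : ∀ k, t k ≤ ∑ i ∈ Finset.range n, q i ^ (k + 1) := by
    intro k
    exact aux_one_sub_prod_le_sum _ _ (fun i hi => (hq01 i hi (k+1)).1)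
      (fun i hi => (hq01 i hi (k+1)).2)
  have hsumgeom : ∀ i ∈ Finset.range n, Summable (fun k : ℕ => q i ^ (k + 1)) := by
    intro i hi
    have := (summable_geometric_of_lt_one (h0 i hi) (h1 i hi)).mul_left (q i)
    refine this.congr fun k => ?_
    rw [← pow_succ']
  have hg : Summable (fun k => ∑ i ∈ Finset.range n, q i ^ (k + 1)) :=
    summable_sum (fun i hi => hsumgeom i hi)
  have hts : Summable t := Summable.of_nonneg_of_le ht0 htg hg
  rw [← Summable.sum_add_tsum_nat_add K hts]
  have hfirst : ∑ k ∈ Finset.range K, t k ≤ (K : ℝ) := by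
    calc ∑ k ∈ Finset.range K, t k ≤ ∑ k ∈ Finset.range K, 1 :=
        Finset.sum_le_sum fun k _ => ht1 k
      _ = K := by simp
  have hsecond : ∑' k : ℕ, t (k + K) ≤ ∑ i ∈ Finset.range n, q i ^ K / (1 - q i) := by
    have hshift : ∀ i ∈ Finset.range n, Summable (fun k : ℕ => q i ^ (k + K + 1)) := by
      intro i hi
      exact (summable_nat_add_iff K).2 (hsumgeom i hi) |>.congr fun k => by ring_nf
    calc ∑' k : ℕ, t (k + K) ≤ ∑' k : ℕ, ∑ i ∈ Finset.range n, q i ^ (k + K + 1) := by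
          refine Summable.tsum_le_tsum (fun k => htg (k + K)) ((summable_nat_add_iff K).2 hts) ?_
          exact summable_sum (fun i hi => hshift i hi)
      _ = ∑ i ∈ Finset.range n, ∑' k : ℕ, q i ^ (k + K + 1) := Summable.tsum_finsetSum (fun i hi => hshift i hi)
      _ ≤ ∑ i ∈ Finset.range n, q i ^ K / (1 - q i) := by
          refine Finset.sum_le_sum fun i hi => ?_
          have hgi := summable_geometric_of_lt_one (h0 i hi) (h1 i hi)
          have : ∑' k : ℕ, q i ^ (k + K + 1) = q i ^ (K + 1) * (1 - q i)⁻¹ := by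
            rw [← tsum_geometric_of_lt_one (h0 i hi) (h1 i hi), ← tsum_mul_left]
            exact tsum_congr fun k => by rw [← pow_add]; ring_nf
          rw [this, div_eq_mul_inv]
          have hinv : (0:ℝ) ≤ (1 - q i)⁻¹ := by
            have : (0:ℝ) < 1 - q i := by linarith [h1 i hi]
            positivity
          have : q i ^ (K + 1) ≤ q i ^ K := by
            rw [pow_succ]
            exact mul_le_of_le_one_right (pow_nonneg (h0 i hi) K) (h1 i hi).le
          exact mul_le_mul_of_nonneg_right this hinv
  linarith


private lemma aux_geom_tail (A C₀ : ℝ) (hA : 2 ≤ A) (hC₀ : 0 < C₀) (M : ℕ) :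
    ∑ j ∈ Finset.Ico 1 M, C₀ * ((j:ℝ) + 1) * Real.exp (-(A * j))
      ≤ 3 * C₀ * Real.exp (-A) := by
  set r : ℝ := 2 * Real.exp (-A) with hr
  have hr0 : 0 ≤ r := by positivity
  have hexp2 : Real.exp (-2:ℝ) ≤ 1/6 := by
    rw [Real.exp_neg]
    rw [show (2:ℝ) = 1 + 1 by norm_num, Real.exp_add]
    have h := Real.exp_one_gt_d9
    rw [inv_le_comm₀ (by positivity) (by norm_num)]
    nlinarith
  have hrle : r ≤ 1/3 := by
    have : Real.exp (-A) ≤ Real.exp (-2:ℝ) := Real.exp_le_exp.2 (by linarith)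
    rw [hr]; linarith
  have hrlt1 : r < 1 := by linarith
  have hterm : ∀ j ∈ Finset.Ico 1 M, C₀ * ((j:ℝ) + 1) * Real.exp (-(A * j)) ≤ C₀ * r ^ j := by
    intro j _
    have h2 : ((j:ℝ) + 1) ≤ 2 ^ j := by
      have := Nat.lt_two_pow_self (n := j)
      have : (j:ℝ) < 2 ^ j := by exact_mod_cast this
      have h2' : ((j:ℝ) + 1) ≤ 2 ^ j := by
        have hnat : j + 1 ≤ 2 ^ j := Nat.lt_two_pow_self (n := j)
        exact_mod_cast hnat
      exact h2'
    have h3 : Real.exp (-(A * j)) = Real.exp (-A) ^ j := by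
      rw [← Real.exp_nat_mul]; ring_nf
    have hexpnn : (0:ℝ) ≤ Real.exp (-A) ^ j := by positivity
    calc C₀ * ((j:ℝ) + 1) * Real.exp (-(A * j))
        = C₀ * (((j:ℝ) + 1) * Real.exp (-A) ^ j) := by rw [h3]; ring
      _ ≤ C₀ * ((2:ℝ) ^ j * Real.exp (-A) ^ j) := by
          apply mul_le_mul_of_nonneg_left (mul_le_mul_of_nonneg_right h2 hexpnn) hC₀.le
      _ = C₀ * r ^ j := by rw [hr, mul_pow]
  have hsum : ∑ j ∈ Finset.Ico 1 M, r ^ j ≤ r * (3/2) := by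
    rw [Finset.sum_Ico_eq_sum_range]
    have : ∑ j ∈ Finset.range (M - 1), r ^ (1 + j) = r * ∑ j ∈ Finset.range (M - 1), r ^ j := by
      rw [Finset.mul_sum]
      exact Finset.sum_congr rfl fun j _ => by rw [pow_add, pow_one]
    rw [this]
    have hgeo : ∑ j ∈ Finset.range (M - 1), r ^ j ≤ (1 - r)⁻¹ := by
      have := Summable.sum_le_tsum (Finset.range (M - 1)) (fun j _ => by positivity)
        (summable_geometric_of_lt_one hr0 hrlt1)
      rwa [tsum_geometric_of_lt_one hr0 hrlt1] at this
    have hinv : (1 - r)⁻¹ ≤ 3/2 := by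
      rw [inv_le_comm₀ (by linarith) (by norm_num)]
      linarith
    exact mul_le_mul_of_nonneg_left (hgeo.trans hinv) hr0
  calc ∑ j ∈ Finset.Ico 1 M, C₀ * ((j:ℝ) + 1) * Real.exp (-(A * j))
      ≤ ∑ j ∈ Finset.Ico 1 M, C₀ * r ^ j := Finset.sum_le_sum hterm
    _ = C₀ * ∑ j ∈ Finset.Ico 1 M, r ^ j := by rw [Finset.mul_sum]
    _ ≤ C₀ * (r * (3/2)) := mul_le_mul_of_nonneg_left hsum hC₀.le
    _ = 3 * C₀ * Real.exp (-A) := by rw [hr]; ring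

private lemma aux_exp_bound (μ : Measure ℝ) [IsProbabilityMeasure μ]
    (A t₀ C₀ : ℝ) (n : ℕ) (hn : 1 ≤ n) (hA : 2 ≤ A) (ht₀ : 0 < t₀) (hC₀ : 0 < C₀)
    (htail : ∀ s : ℝ, 0 < s → s ≤ t₀ → μ (Set.Ioi (1 - s)) ≤ ENNReal.ofReal (C₀ * s)) :
    ∫⁻ x, ENNReal.ofReal
        (if x ≤ 1 - 1/(n:ℝ) then Real.exp (-(A * n) * (1 - x)) / (1 - x) else 0) ∂μ
      ≤ ENNReal.ofReal ((n:ℝ) * Real.exp (-(A * ⌊t₀ * n⌋₊)) + 3 * C₀ * Real.exp (-A)) := by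
  have hnR : (1:ℝ) ≤ (n:ℝ) := by exact_mod_cast hn
  have hnpos : (0:ℝ) < n := by linarith
  have hApos : (0:ℝ) < A := by linarith
  set M : ℕ := ⌊t₀ * n⌋₊ with hM
  set c : ℝ≥0∞ := ENNReal.ofReal ((n:ℝ) * Real.exp (-(A * M))) with hc
  set slice : ℕ → Set ℝ := fun j => Set.Ioc (1 - ((j:ℝ)+1)/(n:ℝ)) (1 - (j:ℝ)/(n:ℝ)) with hslice
  set G : ℝ → ℝ≥0∞ := fun x =>
    (∑ j ∈ Finset.Ico 1 M, (slice j).indicator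
      (fun _ => ENNReal.ofReal ((n:ℝ) * Real.exp (-(A * j)))) x) + c with hG
  have hpoint : ∀ x, ENNReal.ofReal
      (if x ≤ 1 - 1/(n:ℝ) then Real.exp (-(A * n) * (1 - x)) / (1 - x) else 0) ≤ G x := by
    intro x
    by_cases hx : x ≤ 1 - 1/(n:ℝ)
    · rw [if_pos hx]
      have hun : 1/(n:ℝ) ≤ 1 - x := by linarith
      have hupos : (0:ℝ) < 1 - x := lt_of_lt_of_le (by positivity) hun
      have hun1 : (1:ℝ) ≤ (1 - x) * n := by
        rw [div_le_iff₀ hnpos] at hun; linarith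
      set j : ℕ := ⌊(1 - x) * (n:ℝ)⌋₊ with hj
      have hj1 : 1 ≤ j := by
        rw [hj]
        exact Nat.le_floor (by exact_mod_cast hun1)
      have hjle : (j:ℝ) ≤ (1 - x) * n := Nat.floor_le (by positivity)
      have hjlt : (1 - x) * n < (j:ℝ) + 1 := Nat.lt_floor_add_one _
      have hHb : Real.exp (-(A * n) * (1 - x)) / (1 - x) ≤ (n:ℝ) * Real.exp (-(A * j)) := by
        have h1 : Real.exp (-(A * n) * (1 - x)) ≤ Real.exp (-(A * j)) := by
          apply Real.exp_le_exp.2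
          have : A * j ≤ A * ((1 - x) * n) := mul_le_mul_of_nonneg_left hjle hApos.le
          nlinarith
        have h2 : 1 / (1 - x) ≤ (n:ℝ) := by
          rw [div_le_iff₀ hupos]
          rw [div_le_iff₀ hnpos] at hun
          linarith
        calc Real.exp (-(A * n) * (1 - x)) / (1 - x)
            = Real.exp (-(A * n) * (1 - x)) * (1 / (1 - x)) := by ring
          _ ≤ Real.exp (-(A * j)) * (n:ℝ) :=
              mul_le_mul h1 h2 (by positivity) (Real.exp_nonneg _)
          _ = (n:ℝ) * Real.exp (-(A * j)) := by ring
      by_cases hjM : j < M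
      · have hmem : x ∈ slice j := by
          simp only [hslice, Set.mem_Ioc]
          constructor
          · have : (1 - x) < ((j:ℝ)+1)/n := by rw [lt_div_iff₀ hnpos]; linarith
            linarith
          · have : (j:ℝ)/n ≤ 1 - x := by rw [div_le_iff₀ hnpos]; linarith
            linarith
        have hsingle : (slice j).indicator
            (fun _ => ENNReal.ofReal ((n:ℝ) * Real.exp (-(A * j)))) x
            ≤ ∑ j' ∈ Finset.Ico 1 M, (slice j').indicator
              (fun _ => ENNReal.ofReal ((n:ℝ) * Real.exp (-(A * j')))) x :=
          Finset.single_le_sum (f := fun j' => (slice j').indicator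
              (fun _ => ENNReal.ofReal ((n:ℝ) * Real.exp (-(A * j')))) x)
            (fun _ _ => zero_le) (Finset.mem_Ico.2 ⟨hj1, hjM⟩)
        calc ENNReal.ofReal (Real.exp (-(A * n) * (1 - x)) / (1 - x))
            ≤ ENNReal.ofReal ((n:ℝ) * Real.exp (-(A * j))) := ENNReal.ofReal_le_ofReal hHb
          _ = (slice j).indicator (fun _ => ENNReal.ofReal ((n:ℝ) * Real.exp (-(A * j)))) x := by
              rw [Set.indicator_of_mem hmem]
          _ ≤ G x := le_trans hsingle (le_add_right (le_refl _))
      · push_neg at hjM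
        have hb2 : Real.exp (-(A * n) * (1 - x)) / (1 - x) ≤ (n:ℝ) * Real.exp (-(A * M)) := by
          refine hHb.trans ?_
          have : Real.exp (-(A * j)) ≤ Real.exp (-(A * M)) := by
            apply Real.exp_le_exp.2
            have : (M:ℝ) ≤ j := by exact_mod_cast hjM
            nlinarith
          nlinarith [Real.exp_nonneg (-(A * (j:ℝ)))]
        calc ENNReal.ofReal (Real.exp (-(A * n) * (1 - x)) / (1 - x))
            ≤ c := ENNReal.ofReal_le_ofReal hb2
          _ ≤ G x := le_add_left (le_refl _)
    · rw [if_neg hx]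
      simp only [ENNReal.ofReal_zero]
      exact zero_le
  have hMt₀ : (M:ℝ) / n ≤ t₀ := by
    rw [div_le_iff₀ hnpos]
    exact Nat.floor_le (show (0:ℝ) ≤ t₀ * n by positivity)
  have hGint : ∫⁻ x, G x ∂μ ≤ ENNReal.ofReal (3 * C₀ * Real.exp (-A)) + c := by
    have heq : ∫⁻ x, G x ∂μ = (∑ j ∈ Finset.Ico 1 M,
        ENNReal.ofReal ((n:ℝ) * Real.exp (-(A * j))) * μ (slice j)) + c * μ Set.univ := by
      rw [hG, lintegral_add_right _ measurable_const, lintegral_const,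
        lintegral_finset_sum]
      · congr 1
        refine Finset.sum_congr rfl fun j _ => ?_
        exact lintegral_indicator_const measurableSet_Ioc _
      · exact fun j _ => measurable_const.indicator measurableSet_Ioc
    rw [heq, measure_univ, mul_one]
    refine add_le_add_left ?_ c
    have hsliceb : ∀ j ∈ Finset.Ico 1 M,
        ENNReal.ofReal ((n:ℝ) * Real.exp (-(A * j))) * μ (slice j)
          ≤ ENNReal.ofReal (C₀ * ((j:ℝ)+1) * Real.exp (-(A * j))) := by
      intro j hj
      obtain ⟨hj1, hjM⟩ := Finset.mem_Ico.1 hj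
      have hs1 : (0:ℝ) < ((j:ℝ)+1)/n := by positivity
      have hs2 : ((j:ℝ)+1)/n ≤ t₀ := by
        refine le_trans ?_ hMt₀
        have hjM' : ((j:ℝ)+1) ≤ (M:ℝ) := by exact_mod_cast hjM
        exact div_le_div_of_nonneg_right hjM' hnpos.le
      have hμs : μ (slice j) ≤ ENNReal.ofReal (C₀ * (((j:ℝ)+1)/n)) := by
        refine le_trans (measure_mono ?_) (htail _ hs1 hs2)
        exact fun x hx => hx.1
      calc ENNReal.ofReal ((n:ℝ) * Real.exp (-(A * j))) * μ (slice j)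
          ≤ ENNReal.ofReal ((n:ℝ) * Real.exp (-(A * j)))
            * ENNReal.ofReal (C₀ * (((j:ℝ)+1)/n)) := mul_le_mul_right hμs _
        _ = ENNReal.ofReal (C₀ * ((j:ℝ)+1) * Real.exp (-(A * j))) := by
            rw [← ENNReal.ofReal_mul (by positivity)]
            congr 1
            field_simp
    calc ∑ j ∈ Finset.Ico 1 M, ENNReal.ofReal ((n:ℝ) * Real.exp (-(A * j))) * μ (slice j)
        ≤ ∑ j ∈ Finset.Ico 1 M, ENNReal.ofReal (C₀ * ((j:ℝ)+1) * Real.exp (-(A * j))) :=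
          Finset.sum_le_sum hsliceb
      _ = ENNReal.ofReal (∑ j ∈ Finset.Ico 1 M, C₀ * ((j:ℝ)+1) * Real.exp (-(A * j))) :=
          (ENNReal.ofReal_sum_of_nonneg (fun j _ => by positivity)).symm
      _ ≤ ENNReal.ofReal (3 * C₀ * Real.exp (-A)) :=
          ENNReal.ofReal_le_ofReal (aux_geom_tail A C₀ hA hC₀ M)
  calc ∫⁻ x, ENNReal.ofReal
        (if x ≤ 1 - 1/(n:ℝ) then Real.exp (-(A * n) * (1 - x)) / (1 - x) else 0) ∂μ
      ≤ ∫⁻ x, G x ∂μ := lintegral_mono hpoint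
    _ ≤ ENNReal.ofReal (3 * C₀ * Real.exp (-A)) + c := hGint
    _ = ENNReal.ofReal (3 * C₀ * Real.exp (-A) + (n:ℝ) * Real.exp (-(A * M))) := by
        rw [hc, ← ENNReal.ofReal_add (by positivity) (by positivity)]
    _ = ENNReal.ofReal ((n:ℝ) * Real.exp (-(A * ⌊t₀ * n⌋₊)) + 3 * C₀ * Real.exp (-A)) := by
        rw [← hM, add_comm]

end auxx


set_option maxHeartbeats 1000000 in
/-- Tightness of `T_n/n` when the i.i.d. overlaps have density `f` with
`f(1-x) = c + O(x^δ)` as `x → 0+`: for every `ε > 0` there is `y > 0` with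
`P(T_n/n > y) < ε` for all large `n`. -/
theorem stmt_18 {Ω : Type*} [MeasureSpace Ω] [IsProbabilityMeasure (ℙ : Measure Ω)]
    (c δ : ℝ) (hc : 0 < c) (hδ : 0 < δ)
    (p : ℕ → Ω → ℝ) (hmeas : ∀ i, Measurable (p i))
    (hindep : iIndepFun p ℙ)
    (hident : ∀ i, Measure.map (p i) ℙ = Measure.map (p 0) ℙ)
    (hrange : ∀ i ω, p i ω ∈ Set.Icc (0 : ℝ) 1)
    (f : ℝ → ℝ)
    (hf : Measure.map (p 0) ℙ
      = MeasureTheory.volume.withDensity (fun x => ENNReal.ofReal (f x)))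
    (hasymp : (fun x => f (1 - x) - c)
      =O[nhdsWithin 0 (Set.Ioi (0 : ℝ))] (fun x => x ^ δ))
    (T : ℕ → Ω → ℝ)
    (hT : ∀ n ω, T n ω = ∑' k : ℕ,
      (1 - ∏ i ∈ Finset.range n, (1 - p i ω ^ (k + 1)))) :
    ∀ ε > 0, ∃ y : ℝ, 0 < y ∧ ∀ᶠ n : ℕ in atTop,
      ℙ {ω | y < T n ω / n} < ENNReal.ofReal ε := by
  intro ε hε
  -- density bound near 1
  obtain ⟨C₀, t₀, hC₀pos, ht₀pos, ht₀1, hcC₀, hden⟩ :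
      ∃ C₀ t₀ : ℝ, 0 < C₀ ∧ 0 < t₀ ∧ t₀ ≤ 1 ∧ c ≤ C₀ ∧
        ∀ u : ℝ, 0 < u → u ≤ t₀ → f (1 - u) ≤ C₀ := by
    obtain ⟨C₁, hC₁, hbig⟩ := hasymp.exists_pos
    have hb := hbig.bound
    rw [eventually_nhdsWithin_iff, Metric.eventually_nhds_iff] at hb
    obtain ⟨r, hr, hball⟩ := hb
    refine ⟨c + C₁, min (r/2) 1, by positivity, by positivity, min_le_right _ _,
      by linarith, ?_⟩
    intro u hu hut
    have hu1 : u ≤ 1 := hut.trans (min_le_right _ _)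
    have hur : dist u 0 < r := by
      rw [Real.dist_eq, sub_zero, abs_of_pos hu]
      calc u ≤ min (r/2) 1 := hut
        _ ≤ r/2 := min_le_left _ _
        _ < r := by linarith
    have hb2 := hball hur (Set.mem_Ioi.2 hu)
    rw [Real.norm_eq_abs, Real.norm_eq_abs] at hb2
    have habs : |u ^ δ| ≤ 1 := by
      rw [abs_of_nonneg (Real.rpow_nonneg hu.le δ)]
      exact Real.rpow_le_one hu.le hu1 hδ.le
    have h1 : f (1 - u) - c ≤ |f (1 - u) - c| := le_abs_self _
    nlinarith [abs_nonneg (f (1-u) - c)]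
  -- law of each p i
  have hμprob : IsProbabilityMeasure (Measure.map (p 0) ℙ) :=
    Measure.isProbabilityMeasure_map (hmeas 0).aemeasurable
  set μ := Measure.map (p 0) ℙ with hμ
  have hlaw : ∀ (i : ℕ) (s : Set ℝ), MeasurableSet s → ℙ (p i ⁻¹' s) = μ s := by
    intro i s hs
    rw [← Measure.map_apply (hmeas i) hs, hident i]
  -- tail bound
  have htail : ∀ s : ℝ, 0 < s → s ≤ t₀ → μ (Set.Ioi (1 - s)) ≤ ENNReal.ofReal (C₀ * s) := by
    intro s hs hst
    have hIoi1 : μ (Set.Ioi (1:ℝ)) = 0 := by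
      rw [hμ, Measure.map_apply (hmeas 0) measurableSet_Ioi]
      have he : p 0 ⁻¹' Set.Ioi (1:ℝ) = ∅ := by
        ext ω
        simp only [Set.mem_preimage, Set.mem_Ioi, Set.mem_empty_iff_false, iff_false, not_lt]
        exact (hrange 0 ω).2
      rw [he, measure_empty]
    have hsing : μ {(1:ℝ)} = 0 := by
      rw [hf, withDensity_apply _ (measurableSet_singleton 1),
        Measure.restrict_eq_zero.2 Real.volume_singleton, lintegral_zero_measure]
    have hIci : μ (Set.Ici (1:ℝ)) = 0 := by
      have hss : Set.Ici (1:ℝ) ⊆ {(1:ℝ)} ∪ Set.Ioi 1 := by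
        intro x hx
        rcases eq_or_lt_of_le (Set.mem_Ici.1 hx) with h | h
        · exact Or.inl (by simp [h.symm])
        · exact Or.inr h
      refine le_antisymm ?_ zero_le
      calc μ (Set.Ici (1:ℝ)) ≤ μ ({(1:ℝ)} ∪ Set.Ioi 1) := measure_mono hss
        _ ≤ μ {(1:ℝ)} + μ (Set.Ioi 1) := measure_union_le _ _
        _ = 0 := by rw [hsing, hIoi1, add_zero]
    have hIoo : μ (Set.Ioo (1 - s) 1) ≤ ENNReal.ofReal (C₀ * s) := by
      rw [hf, withDensity_apply _ measurableSet_Ioo]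
      calc ∫⁻ x in Set.Ioo (1-s) 1, ENNReal.ofReal (f x) ∂volume
          ≤ ∫⁻ _ in Set.Ioo (1-s) 1, ENNReal.ofReal C₀ ∂volume := by
            refine lintegral_mono_ae ((ae_restrict_iff' measurableSet_Ioo).2 (ae_of_all _ ?_))
            intro x hx
            apply ENNReal.ofReal_le_ofReal
            have h1x : (0:ℝ) < 1 - x := by linarith [hx.2]
            have h2x : 1 - x ≤ t₀ := by linarith [hx.1]
            have hd := hden (1 - x) h1x h2x
            rwa [show (1:ℝ) - (1 - x) = x by ring] at hd
        _ = ENNReal.ofReal C₀ * volume (Set.Ioo (1-s) 1) := setLIntegral_const _ _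
        _ = ENNReal.ofReal (C₀ * s) := by
            rw [Real.volume_Ioo, show (1:ℝ) - (1 - s) = s by ring,
              ← ENNReal.ofReal_mul hC₀pos.le]
    calc μ (Set.Ioi (1 - s)) ≤ μ (Set.Ioo (1-s) 1 ∪ Set.Ici 1) := by
          apply measure_mono
          intro x hx
          rcases lt_or_ge x 1 with h | h
          · exact Or.inl ⟨hx, h⟩
          · exact Or.inr h
      _ ≤ μ (Set.Ioo (1-s) 1) + μ (Set.Ici 1) := measure_union_le _ _
      _ = μ (Set.Ioo (1-s) 1) := by rw [hIci, add_zero]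
      _ ≤ ENNReal.ofReal (C₀ * s) := hIoo
  -- choose A
  obtain ⟨A, hA2, hAe⟩ : ∃ A : ℝ, 2 ≤ A ∧ 3 * C₀ * Real.exp (-A) < ε/8 := by
    have hexp : Tendsto (fun A : ℝ => 3 * C₀ * Real.exp (-A)) atTop (𝓝 0) := by
      simpa using Real.tendsto_exp_neg_atTop_nhds_zero.const_mul (3 * C₀)
    exact ((eventually_ge_atTop (2:ℝ)).and
      (hexp.eventually (eventually_lt_nhds (by positivity)))).exists
  have hApos : (0:ℝ) < A := by linarith
  -- choose B, m
  obtain ⟨B, hB⟩ := exists_nat_gt (max 1 (4*C₀/ε))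
  have hBR : (1:ℝ) ≤ B := (le_max_left _ _).trans hB.le
  have hBpos : (0:ℝ) < B := by linarith
  have hBe : C₀/B ≤ ε/4 := by
    have h4 : 4*C₀/ε < B := (le_max_right _ _).trans_lt hB
    rw [div_lt_iff₀ hε] at h4
    rw [div_le_iff₀ hBpos]
    nlinarith
  obtain ⟨m, hm⟩ := exists_nat_gt (max 1 (4*C₀/ε))
  have hmR : (1:ℝ) ≤ m := (le_max_left _ _).trans hm.le
  have hmpos : (0:ℝ) < m := by linarith
  have hme : C₀ ≤ ε/4 * m := by
    have h4 : 4*C₀/ε < m := (le_max_right _ _).trans_lt hm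
    rw [div_lt_iff₀ hε] at h4
    nlinarith
  refine ⟨A + 2 + (m:ℝ) * B, by nlinarith, ?_⟩
  set y : ℝ := A + 2 + (m:ℝ) * B with hy
  -- eventual smallness of n * exp(-A * floor(t₀ n))
  have hev3 : ∀ᶠ n : ℕ in atTop, (n:ℝ) * Real.exp (-(A * ⌊t₀ * (n:ℝ)⌋₊)) ≤ ε/8 := by
    have h1 : Tendsto (fun x : ℝ => x * Real.exp (-x)) atTop (𝓝 0) := by
      simpa using Real.tendsto_pow_mul_exp_neg_atTop_nhds_zero 1
    have h2 : Tendsto (fun n : ℕ => A * t₀ * (n:ℝ)) atTop atTop :=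
      Tendsto.const_mul_atTop (by positivity) tendsto_natCast_atTop_atTop
    have h3 := h1.comp h2
    have h4 : Tendsto (fun n : ℕ => (Real.exp A / (A * t₀)) *
        ((A * t₀ * (n:ℝ)) * Real.exp (-(A * t₀ * (n:ℝ))))) atTop (𝓝 0) := by
      simpa using h3.const_mul (Real.exp A / (A * t₀))
    filter_upwards [h4.eventually (eventually_le_nhds (by positivity :
        (0:ℝ) < ε/8))] with n hn
    have hfl : t₀ * (n:ℝ) - 1 < (⌊t₀ * (n:ℝ)⌋₊ : ℝ) := Nat.sub_one_lt_floor _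
    have hexple : Real.exp (-(A * ⌊t₀ * (n:ℝ)⌋₊)) ≤ Real.exp (A - A * t₀ * n) :=
      Real.exp_le_exp.2 (by nlinarith)
    have hkey : (n:ℝ) * Real.exp (A - A * t₀ * n)
        = (Real.exp A / (A * t₀)) * ((A * t₀ * (n:ℝ)) * Real.exp (-(A * t₀ * (n:ℝ)))) := by
      rw [show A - A * t₀ * (n:ℝ) = A + -(A * t₀ * n) by ring, Real.exp_add]
      field_simp
    calc (n:ℝ) * Real.exp (-(A * ⌊t₀ * (n:ℝ)⌋₊))
        ≤ (n:ℝ) * Real.exp (A - A * t₀ * n) :=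
          mul_le_mul_of_nonneg_left hexple (Nat.cast_nonneg n)
      _ = _ := hkey
      _ ≤ ε/8 := hn
  have hev2 : ∀ᶠ n : ℕ in atTop, 1/(n:ℝ) ≤ t₀ :=
    tendsto_one_div_atTop_nhds_zero_nat.eventually (eventually_le_nhds ht₀pos)
  filter_upwards [eventually_ge_atTop 1, hev2, hev3] with n hn1 h1n hsm
  -- basic facts about n
  have hnR : (1:ℝ) ≤ (n:ℝ) := by exact_mod_cast hn1
  have hnpos : (0:ℝ) < n := by linarith
  have hBn : (0:ℝ) < (B:ℝ) * n := by positivity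
  -- main objects
  set H : ℝ → ℝ := fun x =>
    if x ≤ 1 - 1/(n:ℝ) then Real.exp (-(A * (n:ℝ)) * (1 - x)) / (1 - x) else 0 with hH
  have hH0 : ∀ x, 0 ≤ H x := by
    intro x
    rw [hH]
    dsimp only
    split_ifs with hx
    · have hn0 : (0:ℝ) < 1/(n:ℝ) := by positivity
      have : (0:ℝ) < 1 - x := by linarith
      positivity
    · exact le_refl 0
  have mH : Measurable H := by
    rw [hH]
    refine Measurable.ite (measurableSet_Iic) ?_ measurable_const
    exact (Real.measurable_exp.comp
      ((measurable_const.sub measurable_id).const_mul (-(A * (n:ℝ))))).div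
      (measurable_const.sub measurable_id)
  set G : ℝ → ℝ := fun x => if 1 - 1/(n:ℝ) < x then (B:ℝ) * (n:ℝ) else 0 with hG
  set F : Ω → ℝ≥0∞ := fun ω => ∑ i ∈ Finset.range n, ENNReal.ofReal (H (p i ω)) with hF
  have mF : Measurable F := by
    rw [hF]
    exact Finset.measurable_sum _ fun i _ =>
      ENNReal.measurable_ofReal.comp (mH.comp (hmeas i))
  set N : Ω → ℝ≥0∞ := fun ω => ∑ i ∈ Finset.range n,
    (if 1 - 1/(n:ℝ) < p i ω then (1:ℝ≥0∞) else 0) with hN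
  have mN : Measurable N := by
    rw [hN]
    refine Finset.measurable_sum _ fun i _ => ?_
    exact Measurable.ite (hmeas i measurableSet_Ioi) measurable_const measurable_const
  set E1 : Set Ω := {ω | (n : ℝ≥0∞) ≤ F ω} with hE1
  set E2 : Set Ω := ⋃ i ∈ Finset.range n, p i ⁻¹' Set.Ioi (1 - 1/((B:ℝ)*(n:ℝ))) with hE2
  set E3 : Set Ω := {ω | (m : ℝ≥0∞) ≤ N ω} with hE3
  -- inclusion
  have hsub : {ω | y < T n ω / n} ⊆ E1 ∪ E2 ∪ E3 := by
    intro ω hω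
    rw [Set.mem_setOf_eq] at hω
    by_contra hcon
    simp only [Set.mem_union, not_or] at hcon
    obtain ⟨⟨hc1, hc2⟩, hc3⟩ := hcon
    rw [hE2] at hc2
    simp only [Set.mem_iUnion, Set.mem_preimage, Set.mem_Ioi, not_exists, not_lt] at hc2
    have hq1 : ∀ i ∈ Finset.range n, p i ω < 1 := by
      intro i hi
      have := hc2 i hi
      have h0 : (0:ℝ) < 1/((B:ℝ)*n) := by positivity
      linarith
    set K : ℕ := ⌈A * (n:ℝ)⌉₊ with hKdef
    have hKA : A * (n:ℝ) ≤ K := Nat.le_ceil _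
    have hK1 : (K:ℝ) ≤ A * n + 1 := (Nat.ceil_lt_add_one (by positivity)).le
    have hTb : T n ω ≤ (K:ℝ) + ∑ i ∈ Finset.range n, (p i ω) ^ K / (1 - p i ω) := by
      rw [hT n ω]
      exact aux_tsum_bound n K (fun i => p i ω) (fun i _ => (hrange i ω).1) hq1
    have hstep : ∀ i ∈ Finset.range n,
        (p i ω) ^ K / (1 - p i ω) ≤ H (p i ω) + G (p i ω) := by
      intro i hi
      have hq0 : 0 ≤ p i ω := (hrange i ω).1
      have hqB : p i ω ≤ 1 - 1/((B:ℝ)*n) := hc2 i hi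
      by_cases hcase : p i ω ≤ 1 - 1/(n:ℝ)
      · rw [hH, hG]
        dsimp only
        rw [if_pos hcase, if_neg (not_lt.2 hcase), add_zero]
        have hn0 : (0:ℝ) < 1/(n:ℝ) := by positivity
        have h1q : (0:ℝ) < 1 - p i ω := by linarith
        refine div_le_div_of_nonneg_right ?_ h1q.le
        have e1 : p i ω ≤ Real.exp (p i ω - 1) := by
          linarith [Real.add_one_le_exp (p i ω - 1)]
        have e2 : (p i ω) ^ K ≤ Real.exp (p i ω - 1) ^ K := pow_le_pow_left₀ hq0 e1 K
        have e3 : Real.exp (p i ω - 1) ^ K = Real.exp ((K:ℝ) * (p i ω - 1)) :=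
          (Real.exp_nat_mul _ K).symm
        have e4 : (K:ℝ) * (p i ω - 1) ≤ (A * n) * (p i ω - 1) :=
          mul_le_mul_of_nonpos_right hKA (by linarith)
        calc (p i ω) ^ K ≤ Real.exp ((K:ℝ) * (p i ω - 1)) := by rw [← e3]; exact e2
          _ ≤ Real.exp ((A * n) * (p i ω - 1)) := Real.exp_le_exp.2 e4
          _ = Real.exp (-(A * (n:ℝ)) * (1 - p i ω)) := by ring_nf
      · push_neg at hcase
        rw [hH, hG]
        dsimp only
        rw [if_neg (not_le.2 hcase), if_pos hcase, zero_add]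
        have h1q : (0:ℝ) < 1 - p i ω := by
          have h0 : (0:ℝ) < 1/((B:ℝ)*n) := by positivity
          linarith
        have hpow : (p i ω) ^ K ≤ 1 := pow_le_one₀ hq0 (hrange i ω).2
        calc (p i ω) ^ K / (1 - p i ω) ≤ 1 / (1 - p i ω) :=
            div_le_div_of_nonneg_right hpow h1q.le
          _ ≤ (B:ℝ) * n := by
            rw [div_le_iff₀ h1q]
            have hmul := mul_le_mul_of_nonneg_left
              (show 1/((B:ℝ)*n) ≤ 1 - p i ω by linarith) hBn.le
            rw [mul_one_div, div_self hBn.ne'] at hmul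
            linarith
    -- bound on sum of H from ¬E1
    have hFlt : F ω < (n : ℝ≥0∞) := not_le.1 hc1
    have hSH : ∑ i ∈ Finset.range n, H (p i ω) ≤ (n:ℝ) := by
      have hFeq : ENNReal.ofReal (∑ i ∈ Finset.range n, H (p i ω)) = F ω := by
        rw [hF]
        exact ENNReal.ofReal_sum_of_nonneg fun i _ => hH0 _
      have hlt : ENNReal.ofReal (∑ i ∈ Finset.range n, H (p i ω))
          < ENNReal.ofReal (n:ℝ) := by
        rw [hFeq, ENNReal.ofReal_natCast]
        exact hFlt
      exact (ENNReal.ofReal_lt_ofReal_iff_of_nonneg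
        (Finset.sum_nonneg fun i _ => hH0 _)).1 hlt |>.le
    -- bound on sum of G from ¬E3
    have hNlt : N ω < (m : ℝ≥0∞) := not_le.1 hc3
    set cnt : ℕ := ((Finset.range n).filter (fun i => 1 - 1/(n:ℝ) < p i ω)).card with hcnt
    have hNeq : N ω = (cnt : ℝ≥0∞) := by
      rw [hN, hcnt]
      dsimp only
      rw [Finset.sum_boole]
    have hcntm : (cnt:ℝ) ≤ (m:ℝ) := by
      rw [hNeq] at hNlt
      have : cnt < m := by exact_mod_cast hNlt
      exact_mod_cast this.le
    have hSG : ∑ i ∈ Finset.range n, G (p i ω) ≤ (m:ℝ) * ((B:ℝ) * n) := by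
      have hGeq : ∑ i ∈ Finset.range n, G (p i ω) = (cnt:ℝ) * ((B:ℝ) * n) := by
        rw [hG, hcnt]
        dsimp only
        rw [Finset.sum_ite, Finset.sum_const, Finset.sum_const, smul_zero, add_zero,
          nsmul_eq_mul]
      rw [hGeq]
      exact mul_le_mul_of_nonneg_right hcntm hBn.le
    -- combine
    have htot : T n ω ≤ y * n := by
      have hsum2 : ∑ i ∈ Finset.range n, (p i ω) ^ K / (1 - p i ω)
          ≤ ∑ i ∈ Finset.range n, H (p i ω) + ∑ i ∈ Finset.range n, G (p i ω) := by
        rw [← Finset.sum_add_distrib]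
        exact Finset.sum_le_sum hstep
      rw [hy]
      nlinarith [hTb, hsum2, hSH, hSG, hK1]
    exact absurd hω (not_lt.2 ((div_le_iff₀ hnpos).2 htot))
  -- probability bounds
  have hIH : ∫⁻ x, ENNReal.ofReal (H x) ∂μ ≤ ENNReal.ofReal (ε/4) := by
    refine le_trans ?_ (ENNReal.ofReal_le_ofReal (show
      (n:ℝ) * Real.exp (-(A * ⌊t₀ * (n:ℝ)⌋₊)) + 3 * C₀ * Real.exp (-A) ≤ ε/4 by
        linarith [hsm, hAe.le]))
    exact aux_exp_bound μ A t₀ C₀ n hn1 hA2 ht₀pos hC₀pos htail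
  have hP1 : ℙ E1 ≤ ENNReal.ofReal (ε/4) := by
    have hmar := meas_ge_le_lintegral_div (μ := ℙ) mF.aemeasurable
      (show (n:ℝ≥0∞) ≠ 0 from Nat.cast_ne_zero.2 (by omega))
      (ENNReal.natCast_ne_top n)
    refine le_trans hmar ?_
    refine ENNReal.div_le_of_le_mul ?_
    have hFint : ∫⁻ ω, F ω ∂ℙ ≤ (n:ℝ≥0∞) * ENNReal.ofReal (ε/4) := by
      rw [hF, lintegral_finset_sum (f := fun i ω => ENNReal.ofReal (H (p i ω))) _
        (fun i _ => ENNReal.measurable_ofReal.comp (mH.comp (hmeas i)))]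
      have heach : ∀ i ∈ Finset.range n,
          ∫⁻ ω, ENNReal.ofReal (H (p i ω)) ∂ℙ ≤ ENNReal.ofReal (ε/4) := by
        intro i _
        have hmap : ∫⁻ ω, ENNReal.ofReal (H (p i ω)) ∂ℙ
            = ∫⁻ x, ENNReal.ofReal (H x) ∂(Measure.map (p i) ℙ) :=
          (lintegral_map (ENNReal.measurable_ofReal.comp mH) (hmeas i)).symm
        rw [hmap, hident i]
        exact hIH
      calc ∑ i ∈ Finset.range n, ∫⁻ ω, ENNReal.ofReal (H (p i ω)) ∂ℙ
          ≤ ∑ _i ∈ Finset.range n, ENNReal.ofReal (ε/4) := Finset.sum_le_sum heach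
        _ = (n:ℝ≥0∞) * ENNReal.ofReal (ε/4) := by
            rw [Finset.sum_const, Finset.card_range, nsmul_eq_mul]
    calc ∫⁻ ω, F ω ∂ℙ ≤ (n:ℝ≥0∞) * ENNReal.ofReal (ε/4) := hFint
      _ = ENNReal.ofReal (ε/4) * (n:ℝ≥0∞) := mul_comm _ _
  have hP2 : ℙ E2 ≤ ENNReal.ofReal (ε/4) := by
    rw [hE2]
    refine le_trans (measure_biUnion_finset_le _ _) ?_
    have heach : ∀ i ∈ Finset.range n,
        ℙ (p i ⁻¹' Set.Ioi (1 - 1/((B:ℝ)*(n:ℝ)))) ≤ ENNReal.ofReal (C₀ * (1/((B:ℝ)*n))) := by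
      intro i _
      rw [hlaw i _ measurableSet_Ioi]
      refine htail _ (by positivity) ?_
      calc 1/((B:ℝ)*n) ≤ 1/(n:ℝ) := by
            apply one_div_le_one_div_of_le hnpos
            nlinarith
        _ ≤ t₀ := h1n
    calc ∑ i ∈ Finset.range n, ℙ (p i ⁻¹' Set.Ioi (1 - 1/((B:ℝ)*(n:ℝ))))
        ≤ ∑ _i ∈ Finset.range n, ENNReal.ofReal (C₀ * (1/((B:ℝ)*n))) :=
          Finset.sum_le_sum heach
      _ = (n:ℝ≥0∞) * ENNReal.ofReal (C₀ * (1/((B:ℝ)*n))) := by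
          rw [Finset.sum_const, Finset.card_range, nsmul_eq_mul]
      _ = ENNReal.ofReal ((n:ℝ) * (C₀ * (1/((B:ℝ)*n)))) := by
          rw [← ENNReal.ofReal_natCast n, ← ENNReal.ofReal_mul (Nat.cast_nonneg n)]
      _ = ENNReal.ofReal (C₀ / B) := by
          congr 1
          field_simp
      _ ≤ ENNReal.ofReal (ε/4) := ENNReal.ofReal_le_ofReal hBe
  have hP3 : ℙ E3 ≤ ENNReal.ofReal (ε/4) := by
    have hmar := meas_ge_le_lintegral_div (μ := ℙ) mN.aemeasurable
      (show (m:ℝ≥0∞) ≠ 0 by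
        exact_mod_cast (show (0:ℕ) < m by exact_mod_cast hmpos).ne')
      (ENNReal.natCast_ne_top m)
    refine le_trans hmar ?_
    refine ENNReal.div_le_of_le_mul ?_
    have hNint : ∫⁻ ω, N ω ∂ℙ ≤ ENNReal.ofReal C₀ := by
      rw [hN, lintegral_finset_sum
        (f := fun i ω => if 1 - 1/(n:ℝ) < p i ω then (1:ℝ≥0∞) else 0) _
        (fun i _ => Measurable.ite (hmeas i measurableSet_Ioi)
          measurable_const measurable_const)]
      have heach : ∀ i ∈ Finset.range n,
          ∫⁻ ω, (if 1 - 1/(n:ℝ) < p i ω then (1:ℝ≥0∞) else 0) ∂ℙ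
            ≤ ENNReal.ofReal (C₀ * (1/(n:ℝ))) := by
        intro i _
        have hrw : (fun ω => if 1 - 1/(n:ℝ) < p i ω then (1:ℝ≥0∞) else 0)
            = fun ω => (Set.Ioi (1 - 1/(n:ℝ))).indicator (fun _ => (1:ℝ≥0∞)) (p i ω) := by
          funext ω
          rw [Set.indicator_apply]
          simp [Set.mem_Ioi]
        rw [hrw]
        have hmap : ∫⁻ ω, (Set.Ioi (1 - 1/(n:ℝ))).indicator (fun _ => (1:ℝ≥0∞)) (p i ω) ∂ℙ
            = ∫⁻ x, (Set.Ioi (1 - 1/(n:ℝ))).indicator (fun _ => (1:ℝ≥0∞)) x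
              ∂(Measure.map (p i) ℙ) :=
          (lintegral_map (measurable_const.indicator measurableSet_Ioi) (hmeas i)).symm
        rw [hmap, hident i, lintegral_indicator_const measurableSet_Ioi, one_mul]
        exact htail _ (by positivity) h1n
      calc ∑ i ∈ Finset.range n, ∫⁻ ω, (if 1 - 1/(n:ℝ) < p i ω then (1:ℝ≥0∞) else 0) ∂ℙ
          ≤ ∑ _i ∈ Finset.range n, ENNReal.ofReal (C₀ * (1/(n:ℝ))) :=
            Finset.sum_le_sum heach
        _ = (n:ℝ≥0∞) * ENNReal.ofReal (C₀ * (1/(n:ℝ))) := by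
            rw [Finset.sum_const, Finset.card_range, nsmul_eq_mul]
        _ = ENNReal.ofReal ((n:ℝ) * (C₀ * (1/(n:ℝ)))) := by
            rw [← ENNReal.ofReal_natCast n, ← ENNReal.ofReal_mul (Nat.cast_nonneg n)]
        _ = ENNReal.ofReal C₀ := by
            congr 1
            field_simp
    refine hNint.trans ?_
    calc ENNReal.ofReal C₀ ≤ ENNReal.ofReal (ε/4 * m) := ENNReal.ofReal_le_ofReal hme
      _ = ENNReal.ofReal (ε/4) * (m:ℝ≥0∞) := by
          rw [← ENNReal.ofReal_natCast m, ← ENNReal.ofReal_mul (by positivity)]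
  calc ℙ {ω | y < T n ω / n} ≤ ℙ (E1 ∪ E2 ∪ E3) := measure_mono hsub
    _ ≤ ℙ (E1 ∪ E2) + ℙ E3 := measure_union_le _ _
    _ ≤ ℙ E1 + ℙ E2 + ℙ E3 := add_le_add_left (measure_union_le _ _) _
    _ ≤ ENNReal.ofReal (ε/4) + ENNReal.ofReal (ε/4) + ENNReal.ofReal (ε/4) :=
        add_le_add (add_le_add hP1 hP2) hP3
    _ = ENNReal.ofReal (ε/4 + ε/4 + ε/4) := by
        rw [← ENNReal.ofReal_add (by positivity) (by positivity),
          ← ENNReal.ofReal_add (by positivity) (by positivity)]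
    _ < ENNReal.ofReal ε := by
        rw [ENNReal.ofReal_lt_ofReal_iff hε]
        linarith
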